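/- Let $t\in(0,1)$ and $x^+\in\ell^1_{\bar r}$ with $\|x^+\|_{k_t}<\infty$. Then for all $x\in\ell^1_{\bar r}$ and all $\alpha>0$, $\|x^+-x\|_{\bar r,1}+\|x^+\|_{\bar r,1}-\|x\|_{\bar r,1} \le 2\|x^+\|_{k_t}^{t/2}\alpha^{-t/2}\|x^+-x\|_{\bar a,2} + 4(2^{1-t}-1)^{-1}\|x^+\|_{k_t}^{t}\alpha^{1-t}$. -/

import Mathlib

open scoped ENNReal
noncomputable section

variable {Λ : Type*}

/-- Weighted `ℓ^p` quasi-norm (value in `ℝ≥0∞`). -/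
def wnorm (ω : Λ → ℝ) (p : ℝ) (x : Λ → ℝ) : ℝ≥0∞ :=
  (∑' j, ENNReal.ofReal (ω j ^ p * |x j| ^ p)) ^ (1 / p)

/-- The interpolating weights `(ω_t)_j = (a_j^{2t-2} r_j^{2-t})^{1/t}`. -/
def omegaWeight (a r : Λ → ℝ) (t : ℝ) : Λ → ℝ :=
  fun j => (a j ^ (2 * t - 2) * r j ^ (2 - t)) ^ (1 / t)

/-- Weighted `ℓ¹` norm `‖x‖_{r,1} = ∑ r_j |x_j|`. -/
def rnorm1 (r : Λ → ℝ) (x : Λ → ℝ) : ℝ≥0∞ := ∑' j, ENNReal.ofReal (r j * |x j|)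

/-- Weighted `ℓ²` norm `‖x‖_{a,2} = (∑ a_j² x_j²)^{1/2}`. -/
def anorm2 (a : Λ → ℝ) (x : Λ → ℝ) : ℝ≥0∞ :=
  (∑' j, ENNReal.ofReal (a j ^ 2 * x j ^ 2)) ^ ((1 : ℝ) / 2)

/-- The sum `∑_j a_j⁻² r_j² 𝟙_{a_j⁻² r_j α < |x_j|}`. -/
def kSum (a r : Λ → ℝ) (α : ℝ) (x : Λ → ℝ) : ℝ≥0∞ :=
  ∑' j, ENNReal.ofReal (if r j * α / a j ^ 2 < |x j| then r j ^ 2 / a j ^ 2 else 0)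

/-- The weak quasi-norm `‖x‖_{k_t} = sup_{α>0} α (kSum α x)^{1/t}`. -/
def knorm (a r : Λ → ℝ) (t : ℝ) (x : Λ → ℝ) : ℝ≥0∞ :=
  ⨆ α ∈ Set.Ioi (0 : ℝ), ENNReal.ofReal α * (kSum a r α x) ^ (1 / t)

/-- Hard thresholding operator. -/
def Tthresh (a r : Λ → ℝ) (α : ℝ) (x : Λ → ℝ) : Λ → ℝ :=
  fun j => if r j * α / a j ^ 2 < |x j| then x j else 0

open MeasureTheory

section Aux

lemma ksum_le (a r : Λ → ℝ) (t : ℝ) (ht : t ∈ Set.Ioo (0:ℝ) 1) (x : Λ → ℝ)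
    (hk : knorm a r t x ≠ ⊤) {β : ℝ} (hβ : 0 < β) :
    kSum a r β x ≤ knorm a r t x ^ t * ENNReal.ofReal (β ^ (-t)) := by
  have h1 : ENNReal.ofReal β * (kSum a r β x) ^ (1 / t) ≤ knorm a r t x :=
    le_iSup₂ (f := fun α _ => ENNReal.ofReal α * (kSum a r α x) ^ (1 / t)) β hβ
  have hβ0 : ENNReal.ofReal β ≠ 0 := by simp [hβ]
  have hβt : ENNReal.ofReal β ≠ ⊤ := ENNReal.ofReal_ne_top
  have h2 : (kSum a r β x) ^ (1 / t) ≤ knorm a r t x * (ENNReal.ofReal β)⁻¹ := by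
    rw [mul_comm] at h1
    rw [← ENNReal.le_div_iff_mul_le (Or.inl hβ0) (Or.inl hβt)] at h1
    rwa [ENNReal.div_eq_inv_mul, mul_comm] at h1
  have ht0 : (0:ℝ) < t := ht.1
  calc kSum a r β x = ((kSum a r β x) ^ (1/t)) ^ t := by
        rw [← ENNReal.rpow_mul, one_div, inv_mul_cancel₀ ht0.ne', ENNReal.rpow_one]
    _ ≤ (knorm a r t x * (ENNReal.ofReal β)⁻¹) ^ t := ENNReal.rpow_le_rpow h2 ht0.le
    _ = knorm a r t x ^ t * ENNReal.ofReal (β ^ (-t)) := by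
        rw [ENNReal.mul_rpow_of_ne_top hk (by simp [hβ0]), ← ENNReal.rpow_neg_one,
          ← ENNReal.rpow_mul, ← ENNReal.ofReal_rpow_of_pos hβ]
        norm_num

lemma two_rpow_le (s : ℝ) (hs0 : 0 ≤ s) (hs1 : s ≤ 1) : (2:ℝ) ^ s ≤ 1 + s := by
  have h := convexOn_exp.2 (Set.mem_univ (0:ℝ)) (Set.mem_univ (Real.log 2))
    (show (0:ℝ) ≤ 1 - s by linarith) hs0 (by ring)
  simp only [smul_eq_mul, mul_zero, zero_add, Real.exp_zero, Real.exp_log two_pos] at h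
  rw [Real.rpow_def_of_pos two_pos]
  calc Real.exp (Real.log 2 * s) = Real.exp (s * Real.log 2) := by ring_nf
    _ ≤ (1 - s) * 1 + s * 2 := h
    _ = 1 + s := by ring

lemma const_ineq (t : ℝ) (ht : t ∈ Set.Ioo (0:ℝ) 1) :
    2 / (1 - t) ≤ 4 * ((2:ℝ) ^ (1 - t) - 1)⁻¹ := by
  have hs0 : (0:ℝ) < 1 - t := by linarith [ht.2]
  have h1 : (1:ℝ) < (2:ℝ) ^ (1 - t) := by
    have := Real.one_lt_rpow_iff_of_pos (x := 2) (y := 1 - t) (by norm_num)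
    exact this.mpr (Or.inl ⟨by norm_num, hs0⟩)
  have h2 : (2:ℝ) ^ (1 - t) - 1 ≤ 2 * (1 - t) := by
    have := two_rpow_le (1 - t) hs0.le (by linarith [ht.1])
    linarith
  rw [show (4:ℝ) * ((2:ℝ) ^ (1 - t) - 1)⁻¹ = 4 / ((2:ℝ) ^ (1 - t) - 1) by ring,
    div_le_div_iff₀ hs0 (by linarith)]
  nlinarith

lemma tsum_cs (u v : Λ → ℝ≥0∞) :
    ∑' j, u j * v j ≤
      (∑' j, u j ^ (2:ℝ)) ^ ((1:ℝ)/2) * (∑' j, v j ^ (2:ℝ)) ^ ((1:ℝ)/2) := by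
  letI : MeasurableSpace Λ := ⊤
  haveI : MeasurableSingletonClass Λ := ⟨fun _ => trivial⟩
  rw [← lintegral_count (fun j => u j * v j), ← lintegral_count (fun j => u j ^ (2:ℝ)),
    ← lintegral_count (fun j => v j ^ (2:ℝ))]
  exact ENNReal.lintegral_mul_le_Lp_mul_Lq _ Real.HolderConjugate.two_two
    measurable_from_top.aemeasurable measurable_from_top.aemeasurable

lemma tail_le (a r : Λ → ℝ) (ha : ∀ j, 0 < a j) (hr : ∀ j, 0 < r j)
    (t : ℝ) (ht : t ∈ Set.Ioo (0:ℝ) 1) (xplus : Λ → ℝ)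
    (hk : knorm a r t xplus ≠ ⊤) (α : ℝ) (hα : 0 < α) :
    ∑' j, ENNReal.ofReal (if r j * α / a j ^ 2 < |xplus j| then 0 else r j * |xplus j|)
      ≤ knorm a r t xplus ^ t * ENNReal.ofReal (α ^ (1 - t) / (1 - t)) := by
  have ht1 : (0:ℝ) < 1 - t := by linarith [ht.2]
  set G : Λ → ℝ → ℝ≥0∞ := fun j β =>
    ENNReal.ofReal (if r j * β / a j ^ 2 < |xplus j| then r j ^ 2 / a j ^ 2 else 0) with hG
  have hGmeas : ∀ j, Measurable (G j) := by
    intro j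
    apply Measurable.ennreal_ofReal
    apply Measurable.ite _ measurable_const measurable_const
    exact measurableSet_lt ((measurable_id.const_mul (r j)).div_const _) measurable_const
  -- step 1: pointwise bound by an integral
  have hstep1 : ∀ j, ENNReal.ofReal
      (if r j * α / a j ^ 2 < |xplus j| then 0 else r j * |xplus j|)
      ≤ ∫⁻ β in Set.Ioc 0 α, G j β := by
    intro j
    by_cases hc : r j * α / a j ^ 2 < |xplus j|
    · simp [hc]
    · have haj := ha j; have hrj := hr j
      set y : ℝ := a j ^ 2 * |xplus j| / r j with hy
      have hylee : y ≤ α := by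
        rw [not_lt] at hc
        rw [hy, div_le_iff₀ hrj]
        rw [le_div_iff₀ (by positivity : (0:ℝ) < a j ^ 2)] at hc
        nlinarith
      have hcond : ∀ β : ℝ, (r j * β / a j ^ 2 < |xplus j|) ↔ β < y := by
        intro β
        rw [hy, div_lt_iff₀ (by positivity : (0:ℝ) < a j ^ 2), lt_div_iff₀ hrj]
        constructor <;> intro h <;> nlinarith
      have hGeq : ∀ β : ℝ, G j β =
          (Set.Iio y).indicator (fun _ => ENNReal.ofReal (r j ^ 2 / a j ^ 2)) β := by
        intro β
        by_cases hb : β < y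
        · simp [hG, (hcond β).mpr hb, Set.indicator_of_mem (Set.mem_Iio.mpr hb)]
        · have : ¬ (r j * β / a j ^ 2 < |xplus j|) := fun h => hb ((hcond β).mp h)
          simp [hG, this, Set.indicator_of_notMem (fun h => hb (Set.mem_Iio.mp h))]
      have hset : Set.Iio y ∩ Set.Ioc 0 α = Set.Ioo 0 y := by
        ext β
        constructor
        · rintro ⟨h1, h2, _⟩; exact ⟨h2, h1⟩
        · rintro ⟨h1, h2⟩; exact ⟨h2, h1, le_trans (le_of_lt h2) hylee⟩
      have hcalc : ∫⁻ β in Set.Ioc 0 α, G j β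
          = ENNReal.ofReal (r j ^ 2 / a j ^ 2) * ENNReal.ofReal y := by
        calc ∫⁻ β in Set.Ioc 0 α, G j β
            = ∫⁻ β in Set.Ioc 0 α,
                (Set.Iio y).indicator (fun _ => ENNReal.ofReal (r j ^ 2 / a j ^ 2)) β := by
              exact lintegral_congr fun β => hGeq β
          _ = ∫⁻ β in Set.Iio y, (fun _ => ENNReal.ofReal (r j ^ 2 / a j ^ 2)) β
                ∂(volume.restrict (Set.Ioc 0 α)) := by
              rw [lintegral_indicator measurableSet_Iio]
          _ = ENNReal.ofReal (r j ^ 2 / a j ^ 2) * volume (Set.Iio y ∩ Set.Ioc 0 α) := by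
              rw [setLIntegral_const, Measure.restrict_apply measurableSet_Iio]
          _ = ENNReal.ofReal (r j ^ 2 / a j ^ 2) * ENNReal.ofReal y := by
              rw [hset, Real.volume_Ioo, sub_zero]
      rw [if_neg hc, hcalc,
        ← ENNReal.ofReal_mul (div_pos (pow_pos hrj 2) (pow_pos haj 2)).le]
      apply ENNReal.ofReal_le_ofReal
      apply le_of_eq
      have haj' : a j ≠ 0 := haj.ne'
      have hrj' : r j ≠ 0 := hrj.ne'
      rw [hy]
      field_simp
  -- step 2: tsum ≤ integral of kSum
  have hstep2 : (∑' j, ENNReal.ofReal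
      (if r j * α / a j ^ 2 < |xplus j| then 0 else r j * |xplus j|))
      ≤ ∫⁻ β in Set.Ioc 0 α, kSum a r β xplus := by
    rw [ENNReal.tsum_eq_iSup_sum]
    apply iSup_le
    intro s
    calc ∑ j ∈ s, ENNReal.ofReal
          (if r j * α / a j ^ 2 < |xplus j| then 0 else r j * |xplus j|)
        ≤ ∑ j ∈ s, ∫⁻ β in Set.Ioc 0 α, G j β := Finset.sum_le_sum fun j _ => hstep1 j
      _ = ∫⁻ β in Set.Ioc 0 α, ∑ j ∈ s, G j β :=
          (lintegral_finset_sum s fun j _ => hGmeas j).symm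
      _ ≤ ∫⁻ β in Set.Ioc 0 α, kSum a r β xplus := by
          apply lintegral_mono
          intro β
          exact ENNReal.sum_le_tsum s
  -- step 3: integral of kSum bound
  have hKt : knorm a r t xplus ^ t ≠ ⊤ := ENNReal.rpow_ne_top_of_nonneg ht.1.le hk
  have hstep3 : (∫⁻ β in Set.Ioc 0 α, kSum a r β xplus)
      ≤ knorm a r t xplus ^ t * ENNReal.ofReal (α ^ (1 - t) / (1 - t)) := by
    have hmono : (∫⁻ β in Set.Ioc 0 α, kSum a r β xplus)
        ≤ ∫⁻ β in Set.Ioc 0 α, knorm a r t xplus ^ t * ENNReal.ofReal (β ^ (-t)) := by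
      apply setLIntegral_mono (by measurability)
      intro β hβ
      exact ksum_le a r t ht xplus hk hβ.1
    have hint : Integrable (fun β : ℝ => β ^ (-t)) (volume.restrict (Set.Ioc 0 α)) := by
      have := intervalIntegral.intervalIntegrable_rpow' (a := 0) (b := α) (r := -t) (by linarith [ht.2])
      rw [intervalIntegrable_iff, Set.uIoc_of_le hα.le] at this
      exact this
    have hnn : 0 ≤ᵐ[volume.restrict (Set.Ioc 0 α)] fun β : ℝ => β ^ (-t) := by
      filter_upwards [self_mem_ae_restrict measurableSet_Ioc] with β hβ
      exact Real.rpow_nonneg hβ.1.le _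
    have hlin : (∫⁻ β in Set.Ioc 0 α, ENNReal.ofReal (β ^ (-t)))
        = ENNReal.ofReal (α ^ (1 - t) / (1 - t)) := by
      rw [← ofReal_integral_eq_lintegral_ofReal hint hnn]
      congr 1
      rw [← intervalIntegral.integral_of_le hα.le,
        integral_rpow (Or.inl (by linarith [ht.2]))]
      rw [Real.zero_rpow (ne_of_gt (by linarith [ht.2]) : -t + 1 ≠ 0)]
      rw [show -t + 1 = 1 - t by ring]
      ring
    calc (∫⁻ β in Set.Ioc 0 α, kSum a r β xplus)
        ≤ ∫⁻ β in Set.Ioc 0 α, knorm a r t xplus ^ t * ENNReal.ofReal (β ^ (-t)) := hmono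
      _ = knorm a r t xplus ^ t * ∫⁻ β in Set.Ioc 0 α, ENNReal.ofReal (β ^ (-t)) :=
          lintegral_const_mul' _ _ hKt
      _ = knorm a r t xplus ^ t * ENNReal.ofReal (α ^ (1 - t) / (1 - t)) := by rw [hlin]
  exact le_trans hstep2 hstep3

end Aux

theorem stmt6 (a r : Λ → ℝ) (ha : ∀ j, 0 < a j) (hr : ∀ j, 0 < r j)
    (t : ℝ) (ht : t ∈ Set.Ioo (0:ℝ) 1)
    (xplus : Λ → ℝ) (hx1 : Summable fun j => r j * |xplus j|)
    (hk : knorm a r t xplus ≠ ⊤)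
    (x : Λ → ℝ) (hx : Summable fun j => r j * |x j|) (α : ℝ) (hα : 0 < α) :
    ENNReal.ofReal ((∑' j, r j * |xplus j - x j|) + (∑' j, r j * |xplus j|)
        - ∑' j, r j * |x j|) ≤
      2 * knorm a r t xplus ^ (t / 2) * ENNReal.ofReal (α ^ (-(t / 2))) *
          anorm2 a (xplus - x)
        + ENNReal.ofReal (4 * (2 ^ (1 - t) - 1)⁻¹) * knorm a r t xplus ^ t *
          ENNReal.ofReal (α ^ (1 - t)) := by
  have ht0 : (0:ℝ) < t := ht.1
  have ht1 : (0:ℝ) < 1 - t := by linarith [ht.2]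
  -- summability of the difference
  have hd : Summable (fun j => r j * |xplus j - x j|) := by
    apply Summable.of_nonneg_of_le (fun j => mul_nonneg (hr j).le (abs_nonneg _))
      (fun j => ?_) (hx1.add hx)
    have h1 : |xplus j - x j| ≤ |xplus j| + |x j| := abs_sub _ _
    have := (hr j).le
    nlinarith
  -- rewrite LHS as a single tsum
  have hsum_eq : (∑' j, r j * |xplus j - x j|) + (∑' j, r j * |xplus j|)
      - ∑' j, r j * |x j|
      = ∑' j, (r j * |xplus j - x j| + r j * |xplus j| - r j * |x j|) := by
    rw [Summable.tsum_sub (hd.add hx1) hx, Summable.tsum_add hd hx1]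
  have hg_nonneg : ∀ j, 0 ≤ r j * |xplus j - x j| + r j * |xplus j| - r j * |x j| := by
    intro j
    have h1 : |x j| - |xplus j| ≤ |x j - xplus j| := abs_sub_abs_le_abs_sub _ _
    rw [abs_sub_comm] at h1
    have := (hr j).le
    nlinarith
  rw [hsum_eq, ENNReal.ofReal_tsum_of_nonneg hg_nonneg ((hd.add hx1).sub hx)]
  -- termwise split
  set A : Λ → ℝ≥0∞ := fun j =>
    ENNReal.ofReal (if r j * α / a j ^ 2 < |xplus j| then 2 * (r j * |xplus j - x j|) else 0)
    with hA
  set B : Λ → ℝ≥0∞ := fun j =>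
    ENNReal.ofReal (if r j * α / a j ^ 2 < |xplus j| then 0 else 2 * (r j * |xplus j|))
    with hB
  have hbound : ∀ j, ENNReal.ofReal
      (r j * |xplus j - x j| + r j * |xplus j| - r j * |x j|) ≤ A j + B j := by
    intro j
    have hrj := (hr j).le
    by_cases hc : r j * α / a j ^ 2 < |xplus j|
    · have h1 : |xplus j| - |x j| ≤ |xplus j - x j| := abs_sub_abs_le_abs_sub _ _
      calc ENNReal.ofReal (r j * |xplus j - x j| + r j * |xplus j| - r j * |x j|)
          ≤ A j := by
            rw [hA]; simp only [if_pos hc]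
            exact ENNReal.ofReal_le_ofReal (by nlinarith)
        _ ≤ A j + B j := le_self_add
    · have h1 : |xplus j - x j| ≤ |xplus j| + |x j| := abs_sub _ _
      calc ENNReal.ofReal (r j * |xplus j - x j| + r j * |xplus j| - r j * |x j|)
          ≤ B j := by
            rw [hB]; simp only [if_neg hc]
            exact ENNReal.ofReal_le_ofReal (by nlinarith)
        _ ≤ A j + B j := le_add_self
  refine le_trans (le_trans (ENNReal.tsum_le_tsum hbound) (le_of_eq ENNReal.tsum_add)) ?_
  apply add_le_add
  -- Part A : Cauchy-Schwarz
  · set u : Λ → ℝ≥0∞ := fun j =>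
      ENNReal.ofReal (if r j * α / a j ^ 2 < |xplus j| then r j / a j else 0) with hu
    set v : Λ → ℝ≥0∞ := fun j => ENNReal.ofReal (a j * |xplus j - x j|) with hv
    have hAuv : ∀ j, A j = 2 * (u j * v j) := by
      intro j
      have haj := ha j; have hrj := hr j
      by_cases hc : r j * α / a j ^ 2 < |xplus j|
      · rw [hA, hu, hv]; simp only [if_pos hc]
        rw [← ENNReal.ofReal_mul (by positivity),
          show r j / a j * (a j * |xplus j - x j|) = r j * |xplus j - x j| by
            have := haj.ne'; field_simp,
          ENNReal.ofReal_mul (by norm_num), ENNReal.ofReal_ofNat]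
      · rw [hA, hu]; simp [hc]
    have hu2 : (∑' j, u j ^ (2:ℝ)) = kSum a r α xplus := by
      apply tsum_congr
      intro j
      have haj := ha j; have hrj := hr j
      rw [hu, ENNReal.ofReal_rpow_of_nonneg (by positivity) (by norm_num)]
      congr 1
      rw [show ((2:ℝ)) = ((2:ℕ):ℝ) by norm_num, Real.rpow_natCast]
      by_cases hc : r j * α / a j ^ 2 < |xplus j| <;> simp [hc, div_pow]
    have hv2 : (∑' j, v j ^ (2:ℝ)) ^ ((1:ℝ)/2) = anorm2 a (xplus - x) := by
      rw [anorm2]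
      congr 1
      apply tsum_congr
      intro j
      have haj := ha j
      rw [hv, ENNReal.ofReal_rpow_of_nonneg (by positivity) (by norm_num)]
      congr 1
      rw [show ((2:ℝ)) = ((2:ℕ):ℝ) by norm_num, Real.rpow_natCast]
      rw [mul_pow, sq_abs, Pi.sub_apply]
    have hks : (kSum a r α xplus) ^ ((1:ℝ)/2)
        ≤ knorm a r t xplus ^ (t/2) * ENNReal.ofReal (α ^ (-(t/2))) := by
      have h1 := ENNReal.rpow_le_rpow (ksum_le a r t ht xplus hk hα)
        (by norm_num : (0:ℝ) ≤ 1/2)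
      refine le_trans h1 (le_of_eq ?_)
      rw [ENNReal.mul_rpow_of_ne_top (ENNReal.rpow_ne_top_of_nonneg ht0.le hk)
        ENNReal.ofReal_ne_top]
      rw [← ENNReal.rpow_mul, show t * (1/2) = t/2 by ring]
      rw [ENNReal.ofReal_rpow_of_nonneg (Real.rpow_nonneg hα.le _)
        (by norm_num : (0:ℝ) ≤ 1/2)]
      congr 1
      rw [← Real.rpow_mul hα.le]
      congr 1
      ring
    calc ∑' j, A j = 2 * ∑' j, u j * v j := by
          rw [tsum_congr hAuv, ENNReal.tsum_mul_left]
      _ ≤ 2 * ((∑' j, u j ^ (2:ℝ)) ^ ((1:ℝ)/2) * (∑' j, v j ^ (2:ℝ)) ^ ((1:ℝ)/2)) := by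
          exact mul_le_mul_right (tsum_cs u v) 2
      _ = 2 * ((kSum a r α xplus) ^ ((1:ℝ)/2) * anorm2 a (xplus - x)) := by
          rw [hu2, hv2]
      _ ≤ 2 * (knorm a r t xplus ^ (t/2) * ENNReal.ofReal (α ^ (-(t/2))) * anorm2 a (xplus - x)) := by
          exact mul_le_mul_right (mul_le_mul_left hks _) 2
      _ = 2 * knorm a r t xplus ^ (t/2) * ENNReal.ofReal (α ^ (-(t/2))) * anorm2 a (xplus - x) := by
          ring
  -- Part B : tail bound
  · have hBF : ∀ j, B j = 2 * ENNReal.ofReal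
        (if r j * α / a j ^ 2 < |xplus j| then 0 else r j * |xplus j|) := by
      intro j
      have hrj := (hr j).le
      by_cases hc : r j * α / a j ^ 2 < |xplus j|
      · rw [hB]; simp [hc]
      · rw [hB]; simp only [if_neg hc]
        rw [ENNReal.ofReal_mul (by norm_num), ENNReal.ofReal_ofNat]
    have htail := tail_le a r ha hr t ht xplus hk α hα
    calc ∑' j, B j
        = 2 * ∑' j, ENNReal.ofReal
            (if r j * α / a j ^ 2 < |xplus j| then 0 else r j * |xplus j|) := by
          rw [tsum_congr hBF, ENNReal.tsum_mul_left]
      _ ≤ 2 * (knorm a r t xplus ^ t * ENNReal.ofReal (α ^ (1 - t) / (1 - t))) :=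
          mul_le_mul_right htail 2
      _ = knorm a r t xplus ^ t * ENNReal.ofReal (2 * (α ^ (1 - t) / (1 - t))) := by
          rw [ENNReal.ofReal_mul (by norm_num), ENNReal.ofReal_ofNat]; ring
      _ ≤ knorm a r t xplus ^ t * (ENNReal.ofReal (4 * (2 ^ (1 - t) - 1)⁻¹) *
            ENNReal.ofReal (α ^ (1 - t))) := by
          apply mul_le_mul_right
          have hpos : (0:ℝ) < (2:ℝ) ^ (1 - t) - 1 := by
            have := Real.one_lt_rpow_iff_of_pos (x := 2) (y := 1 - t) (by norm_num)
            linarith [this.mpr (Or.inl ⟨by norm_num, ht1⟩)]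
          rw [← ENNReal.ofReal_mul
            (mul_nonneg (by norm_num) (inv_nonneg.mpr hpos.le))]
          apply ENNReal.ofReal_le_ofReal
          rw [show 2 * (α ^ (1 - t) / (1 - t)) = (2 / (1 - t)) * α ^ (1 - t) by ring]
          exact mul_le_mul_of_nonneg_right (const_ineq t ht) (Real.rpow_nonneg hα.le _)
      _ = ENNReal.ofReal (4 * (2 ^ (1 - t) - 1)⁻¹) * knorm a r t xplus ^ t *
            ENNReal.ofReal (α ^ (1 - t)) := by ring
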